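/- Let D be a (possibly noncommutative) division ring, V a left D-module, and m ≥ 2. Let A_1, …, A_m ∈ V be linearly independent over D, let α_1, …, α_m, β_1, …, β_m ∈ D be nonzero, and set B_i := α_i • A_i + β_i • A_{i+1} for i = 1, …, m, indices taken modulo m (so B_m = α_m • A_m + β_m • A_1). Then B_m lies in the left D-submodule spanned by B_1, …, B_{m−1} if and only if the ordered product (−α_1⁻¹·β_1)·(−α_2⁻¹·β_2)⋯(−α_m⁻¹·β_m) equals 1 in D. -/

import Mathlib

private lemma ofFn_eq_map_range {D : Type*} (k : ℕ) (f : Fin k → D) (g : ℕ → D)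
    (h : ∀ i : Fin k, f i = g i) : List.ofFn f = (List.range k).map g := by
  apply List.ext_getElem <;> simp [h]

private lemma range_succ_prod {D : Type*} [Monoid D] (k : ℕ) (g : ℕ → D) :
    ((List.range (k+1)).map g).prod = ((List.range k).map g).prod * g k := by
  rw [List.range_succ, List.map_append]; simp

private lemma key {D : Type*} [DivisionRing D] (n : ℕ) (a b : ℕ → D)
    (ha : ∀ k, a k ≠ 0) (c : ℕ → D)
    (h0 : c 0 * a 0 = b (n+1))
    (hmid : ∀ j, j < n → c (j+1) * a (j+1) + c j * b j = 0) :
    ∀ j, j ≤ n → c j * b j =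
      -b (n+1) * ((List.range (j+1)).map (fun i => -(a i)⁻¹ * b i)).prod := by
  intro j
  induction j with
  | zero =>
    intro _
    have hc0 : c 0 = b (n+1) * (a 0)⁻¹ := (eq_mul_inv_iff_mul_eq₀ (ha 0)).2 h0
    rw [hc0]
    simp only [List.range_succ, List.range_zero, List.map_append, List.map_cons, List.map_nil, List.nil_append, List.prod_append, List.prod_cons, List.prod_nil,
      mul_one]
    noncomm_ring
  | succ j ih =>
    intro hj
    have hrec : c (j+1) = -(c j * b j) * (a (j+1))⁻¹ :=
      (eq_mul_inv_iff_mul_eq₀ (ha (j+1))).2 (eq_neg_of_add_eq_zero_left (hmid j (by omega)))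
    have hcj := ih (by omega)
    rw [range_succ_prod, hrec, hcj]
    noncomm_ring

private lemma sum_iff {D : Type*} [DivisionRing D] {V : Type*} [AddCommGroup V] [Module D V]
    (n : ℕ) (A : Fin (n+2) → V) (hA : LinearIndependent D A)
    (α β : Fin (n+2) → D) (a b : ℕ → D)
    (hax : ∀ (k : ℕ) (h : k < n+2), a k = α ⟨k, h⟩)
    (hbx : ∀ (k : ℕ) (h : k < n+2), b k = β ⟨k, h⟩)
    (c : Fin (n+1) → D) (c' : ℕ → D)
    (hcx : ∀ (k : ℕ) (h : k < n+1), c' k = c ⟨k, h⟩) :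
    (∑ j : Fin (n+1), c j • (α j.castSucc • A j.castSucc + β j.castSucc • A j.succ) =
        α (Fin.last (n+1)) • A (Fin.last (n+1)) + β (Fin.last (n+1)) • A 0) ↔
      (c' 0 * a 0 = b (n+1) ∧
        (∀ j, j < n → c' (j+1) * a (j+1) + c' j * b j = 0) ∧
        c' n * b n = a (n+1)) := by
  set g : Fin (n+2) → D := fun i =>
    (if (i:ℕ) < n+1 then c' i * a i else 0) +
    (if 0 < (i:ℕ) then c' ((i:ℕ)-1) * b ((i:ℕ)-1) else 0) -
    (if (i:ℕ) = n+1 then a (n+1) else 0) -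
    (if (i:ℕ) = 0 then b (n+1) else 0) with hgdef
  have h1 : ∑ i : Fin (n+2), (if (i:ℕ) < n+1 then c' i * a i else 0) • A i =
      ∑ j : Fin (n+1), (c j * α j.castSucc) • A j.castSucc := by
    rw [Fin.sum_univ_castSucc]
    simp only [Fin.val_last, lt_irrefl, if_neg, if_false, zero_smul, add_zero]
    refine Finset.sum_congr rfl fun j _ => ?_
    have hj : (j.castSucc : ℕ) < n + 1 := by simp [Fin.is_lt]; have := j.is_lt; omega
    rw [if_pos hj, hcx _ (by simpa using hj), hax _ (by omega)]
    congr 2 <;> ext <;> simp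
  have h2 : ∑ i : Fin (n+2), (if 0 < (i:ℕ) then c' ((i:ℕ)-1) * b ((i:ℕ)-1) else 0) • A i =
      ∑ j : Fin (n+1), (c j * β j.castSucc) • A j.succ := by
    rw [Fin.sum_univ_succ]
    simp only [Fin.val_zero, lt_irrefl, if_neg, if_false, zero_smul, zero_add]
    refine Finset.sum_congr rfl fun j _ => ?_
    have hj : 0 < (j.succ : ℕ) := by simp
    rw [if_pos hj]
    have hv : (j.succ : ℕ) - 1 = (j : ℕ) := by simp
    rw [hv, hcx _ j.is_lt, hbx _ (by omega)]
    congr 2 <;> ext <;> simp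
  have h3 : ∑ i : Fin (n+2), (if (i:ℕ) = n+1 then a (n+1) else 0) • A i =
      α (Fin.last (n+1)) • A (Fin.last (n+1)) := by
    rw [Fin.sum_univ_castSucc]
    have : ∀ j : Fin (n+1), (if ((j.castSucc : Fin (n+2)) : ℕ) = n+1 then a (n+1) else 0) •
        A j.castSucc = 0 := by
      intro j
      rw [if_neg (by simp; omega), zero_smul]
    simp only [this, Finset.sum_const_zero, zero_add, Fin.val_last, if_pos rfl]
    rw [hax _ (by omega)]
    congr 1
  have h4 : ∑ i : Fin (n+2), (if (i:ℕ) = 0 then b (n+1) else 0) • A i =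
      β (Fin.last (n+1)) • A 0 := by
    rw [Fin.sum_univ_succ]
    have : ∀ j : Fin (n+1), (if ((j.succ : Fin (n+2)) : ℕ) = 0 then b (n+1) else 0) •
        A j.succ = 0 := by
      intro j
      rw [if_neg (by simp), zero_smul]
    simp only [this, Finset.sum_const_zero, add_zero, Fin.val_zero, if_pos rfl]
    rw [hbx _ (by omega)]
    congr 1
  have hg : ∑ i : Fin (n+2), g i • A i =
      (∑ j : Fin (n+1), c j • (α j.castSucc • A j.castSucc + β j.castSucc • A j.succ)) -
        (α (Fin.last (n+1)) • A (Fin.last (n+1)) + β (Fin.last (n+1)) • A 0) := by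
    simp only [hgdef, sub_smul, add_smul, Finset.sum_sub_distrib, Finset.sum_add_distrib,
      h1, h2, h3, h4, smul_add, smul_smul]
    abel
  constructor
  · intro h
    have hz : ∀ i, g i = 0 := by
      apply Fintype.linearIndependent_iff.mp hA
      rw [hg, h, sub_self]
    refine ⟨?_, ?_, ?_⟩
    · have := hz 0
      simp only [hgdef, Fin.val_zero, if_pos (by omega : (0:ℕ) < n+1), if_neg (lt_irrefl 0),
        if_neg (by omega : ¬ (0:ℕ) = n+1), if_pos rfl, if_true, add_zero, sub_zero] at this
      exact sub_eq_zero.mp (by simpa using this)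
    · intro j hj
      have := hz ⟨j+1, by omega⟩
      simp only [hgdef, if_pos (by omega : j+1 < n+1), if_pos (by omega : 0 < j+1),
        Nat.add_sub_cancel, if_neg (by omega : ¬ j+1 = n+1), if_neg (by omega : ¬ j+1 = 0),
        sub_zero] at this
      exact this
    · have := hz (Fin.last (n+1))
      simp only [hgdef, Fin.val_last, if_neg (lt_irrefl (n+1)), if_pos (by omega : 0 < n+1),
        Nat.add_sub_cancel, if_pos rfl, if_true, if_neg (by omega : ¬ n+1 = 0), sub_zero,
        zero_add] at this
      exact sub_eq_zero.mp this
  · rintro ⟨e0, emid, elast⟩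
    have hz : ∀ i : Fin (n+2), g i = 0 := by
      rintro ⟨k, hk⟩
      simp only [hgdef]
      rcases Nat.eq_zero_or_pos k with rfl | hk0
      · rw [if_pos (by omega), if_neg (lt_irrefl 0), if_neg (by omega : ¬ (0:ℕ) = n+1),
          if_pos rfl]
        simp [e0]
      rcases eq_or_ne k (n+1) with rfl | hkn
      · rw [if_neg (lt_irrefl (n+1)), if_pos hk0, Nat.add_sub_cancel, if_pos rfl,
          if_neg (by omega)]
        simp [elast]
      · have hk1 : k < n + 1 := by omega
        obtain ⟨j, rfl⟩ : ∃ j, k = j + 1 := ⟨k - 1, by omega⟩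
        rw [if_pos hk1, if_pos hk0, Nat.add_sub_cancel, if_neg hkn, if_neg (by omega)]
        simp only [sub_zero]
        exact emid j (by omega)
    have : ∑ i : Fin (n+2), g i • A i = 0 := by
      simp [fun i => hz i]
    rw [hg] at this
    exact sub_eq_zero.mp this

/-- Noncommutative Menelaus: `B_m` lies in the span of `B₁, …, B_{m-1}` iff the ordered
product `(-α₁⁻¹β₁)⋯(-α_m⁻¹β_m)` equals `1`. -/
theorem stmt1 (D : Type*) [DivisionRing D] (V : Type*) [AddCommGroup V] [Module D V]
    (m : ℕ) (hm : 2 ≤ m)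
    (A : Fin m → V) (hA : LinearIndependent D A)
    (α β : Fin m → D) (hα : ∀ i, α i ≠ 0) (hβ : ∀ i, β i ≠ 0)
    (B : Fin m → V)
    (hB : ∀ i : Fin m,
      B i = α i • A i + β i • A ⟨((i : ℕ) + 1) % m, Nat.mod_lt _ (by omega)⟩) :
    B ⟨m - 1, by omega⟩ ∈ Submodule.span D (B '' {i : Fin m | (i : ℕ) + 1 < m}) ↔
      (List.ofFn fun i : Fin m => -(α i)⁻¹ * β i).prod = 1 := by
  obtain ⟨n, rfl⟩ : ∃ n, m = n + 2 := ⟨m - 2, by omega⟩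
  -- abbreviations to ℕ-indexed functions
  set a : ℕ → D := fun k => if h : k < n + 2 then α ⟨k, h⟩ else 1 with ha_def
  set b : ℕ → D := fun k => if h : k < n + 2 then β ⟨k, h⟩ else 1 with hb_def
  have hax : ∀ (k : ℕ) (h : k < n + 2), a k = α ⟨k, h⟩ := fun k h => dif_pos h
  have hbx : ∀ (k : ℕ) (h : k < n + 2), b k = β ⟨k, h⟩ := fun k h => dif_pos h
  have ha0 : ∀ k, a k ≠ 0 := by
    intro k
    by_cases h : k < n + 2
    · rw [hax k h]; exact hα _
    · simp [ha_def, h]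
  have hb0 : ∀ k, b k ≠ 0 := by
    intro k
    by_cases h : k < n + 2
    · rw [hbx k h]; exact hβ _
    · simp [hb_def, h]
  -- the product over ℕ range
  have hprod : (List.ofFn fun i : Fin (n+2) => -(α i)⁻¹ * β i).prod =
      ((List.range (n+2)).map (fun i => -(a i)⁻¹ * b i)).prod := by
    exact congrArg List.prod (ofFn_eq_map_range _ _ _
      (fun i => by simp only [hax _ i.is_lt, hbx _ i.is_lt, Fin.eta]))
  -- rewrite the span side
  have hset : B '' {i : Fin (n + 2) | (i : ℕ) + 1 < n + 2} =
      Set.range (fun j : Fin (n + 1) => B j.castSucc) := by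
    ext v
    constructor
    · rintro ⟨i, hi, rfl⟩
      exact ⟨⟨(i : ℕ), by simpa using hi⟩, rfl⟩
    · rintro ⟨j, rfl⟩
      exact ⟨j.castSucc, by simpa using (by omega : (j:ℕ) + 1 < n + 2), rfl⟩
  have hBlast : B ⟨n + 2 - 1, by omega⟩ = B (Fin.last (n + 1)) := rfl
  rw [hBlast, hset, Submodule.mem_span_range_iff_exists_fun, hprod]
  -- expand B
  have hBc : ∀ j : Fin (n+1), B j.castSucc
      = α j.castSucc • A j.castSucc + β j.castSucc • A j.succ := by
    intro j
    rw [hB, show (⟨((j.castSucc : ℕ) + 1) % (n + 2), Nat.mod_lt _ (by omega)⟩ : Fin (n+2))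
      = j.succ from by
        ext
        simp [Nat.mod_eq_of_lt (show (j : ℕ) + 1 < n + 2 by omega)]]
  have hBl : B (Fin.last (n+1))
      = α (Fin.last (n+1)) • A (Fin.last (n+1)) + β (Fin.last (n+1)) • A 0 := by
    rw [hB, show (⟨(((Fin.last (n+1)) : ℕ) + 1) % (n + 2), Nat.mod_lt _ (by omega)⟩ : Fin (n+2))
      = 0 from by ext; simp]
  simp only [hBc, hBl]
  constructor
  · rintro ⟨c, hc⟩
    set c' : ℕ → D := fun k => if h : k < n + 1 then c ⟨k, h⟩ else 0 with hc'def
    have hcx : ∀ (k : ℕ) (h : k < n + 1), c' k = c ⟨k, h⟩ := fun k h => dif_pos h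
    obtain ⟨e0, emid, elast⟩ :=
      (sum_iff n A hA α β a b hax hbx c c' hcx).mp hc
    have hk := key n a b ha0 c' e0 emid n le_rfl
    rw [elast] at hk
    -- hk : a (n+1) = -b (n+1) * P (n+1)
    have hbP : b (n+1) * ((List.range (n+1)).map (fun i => -(a i)⁻¹ * b i)).prod
        = -a (n+1) := by rw [hk, neg_mul, neg_neg]
    have hP : ((List.range (n+1)).map (fun i => -(a i)⁻¹ * b i)).prod
        = (b (n+1))⁻¹ * -a (n+1) := (eq_inv_mul_iff_mul_eq₀ (hb0 _)).2 hbP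
    have h1 : a (n+1) * ((a (n+1))⁻¹ * b (n+1)) = b (n+1) := by
      rw [← mul_assoc, mul_inv_cancel₀ (ha0 _), one_mul]
    rw [range_succ_prod, hP, mul_neg, neg_mul, neg_mul ((a (n+1))⁻¹) (b (n+1)), mul_neg,
      neg_neg, mul_assoc, h1, inv_mul_cancel₀ (hb0 _)]
  · intro hp
    set c' : ℕ → D := fun k =>
      Nat.rec (b (n+1) * (a 0)⁻¹) (fun j cj => -(cj * b j) * (a (j+1))⁻¹) k with hc'def
    have hc'0 : c' 0 = b (n+1) * (a 0)⁻¹ := rfl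
    have hc's : ∀ j, c' (j+1) = -(c' j * b j) * (a (j+1))⁻¹ := fun j => rfl
    have e0 : c' 0 * a 0 = b (n+1) := by
      rw [hc'0, inv_mul_cancel_right₀ (ha0 0)]
    have emid : ∀ j, j < n → c' (j+1) * a (j+1) + c' j * b j = 0 := by
      intro j _
      rw [hc's, inv_mul_cancel_right₀ (ha0 (j+1)), neg_add_cancel]
    have elast : c' n * b n = a (n+1) := by
      have hk := key n a b ha0 c' e0 emid n le_rfl
      rw [range_succ_prod] at hp
      rw [hk, eq_inv_of_mul_eq_one_left hp, mul_inv_rev, inv_neg, inv_inv, mul_neg,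
        neg_mul_neg, ← mul_assoc, mul_inv_cancel₀ (hb0 _), one_mul]
    exact ⟨fun j => c' j,
      (sum_iff n A hA α β a b hax hbx (fun j => c' j) c'
        (fun k h => rfl)).mpr ⟨e0, emid, elast⟩⟩
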